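/- Let M be a left 𝕆-module, and let U ⊆ Assoc(M) and V ⊆ ConjAssoc(M) be real subspaces. Then the 𝕆-submodule M' := 𝕆U + 𝕆V (the real span of all pu and qv with p,q ∈ 𝕆, u ∈ U, v ∈ V) satisfies Assoc(M') = U and ConjAssoc(M') = V. -/

import Mathlib

noncomputable section

open Quaternion

/-- The octonions, via the Cayley–Dickson construction on the quaternions. -/
def Octonion : Type := ℍ[ℝ] × ℍ[ℝ]

namespace Octonion

instance : AddCommGroup Octonion := inferInstanceAs (AddCommGroup (ℍ[ℝ] × ℍ[ℝ]))
instance : Module ℝ Octonion := inferInstanceAs (Module ℝ (ℍ[ℝ] × ℍ[ℝ]))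

instance : One Octonion := ⟨((1 : ℍ[ℝ]), (0 : ℍ[ℝ]))⟩
instance : Mul Octonion :=
  ⟨fun x y => (x.1 * y.1 - star y.2 * x.2, y.2 * x.1 + x.2 * star y.1)⟩
/-- Octonionic conjugation. -/
instance : Star Octonion := ⟨fun x => (star x.1, -x.2)⟩

/-- The associator `[a,b,c] = (ab)c - a(bc)`. -/
def assoc (a b c : Octonion) : Octonion := a * b * c - a * (b * c)

/-- The standard imaginary units `e 0 = e₁, …, e 6 = e₇`. -/
def e : Fin 7 → Octonion
  | 0 => ((⟨0,1,0,0⟩ : ℍ[ℝ]), 0)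
  | 1 => ((⟨0,0,1,0⟩ : ℍ[ℝ]), 0)
  | 2 => ((⟨0,0,0,1⟩ : ℍ[ℝ]), 0)
  | 3 => (0, (1 : ℍ[ℝ]))
  | 4 => (0, (⟨0,1,0,0⟩ : ℍ[ℝ]))
  | 5 => (0, (⟨0,0,1,0⟩ : ℍ[ℝ]))
  | 6 => (0, (⟨0,0,0,1⟩ : ℍ[ℝ]))

end Octonion

/-- A left `𝕆`-module: a real vector space with an `ℝ`-bilinear octonion action
satisfying `1 • m = m` and the alternating rule. -/
structure LeftOModule (M : Type) [AddCommGroup M] [Module ℝ M] where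
  smul : Octonion →ₗ[ℝ] M →ₗ[ℝ] M
  one_smul : ∀ m : M, smul 1 m = m
  alt : ∀ (p q : Octonion) (m : M),
    smul (p * q) m - smul p (smul q m) = -(smul (q * p) m - smul q (smul p m))

/-- An `𝕆`-bimodule: compatible left and right `𝕆`-module structures with
`[p,q,m] = [q,m,p] = [m,p,q]`.  Here `l p m` is `p * m` and `r p m` is `m * p`. -/
structure OBimodule (M : Type) [AddCommGroup M] [Module ℝ M] where
  l : Octonion →ₗ[ℝ] M →ₗ[ℝ] M
  r : Octonion →ₗ[ℝ] M →ₗ[ℝ] M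
  one_l : ∀ m : M, l 1 m = m
  one_r : ∀ m : M, r 1 m = m
  /-- left alternating rule `[p,q,m] = -[q,p,m]` -/
  alt_l : ∀ (p q : Octonion) (m : M),
    l (p * q) m - l p (l q m) = -(l (q * p) m - l q (l p m))
  /-- right alternating rule `[m,p,q] = -[m,q,p]` -/
  alt_r : ∀ (p q : Octonion) (m : M),
    r q (r p m) - r (p * q) m = -(r p (r q m) - r (q * p) m)
  /-- `[p,q,m] = [q,m,p]` -/
  comp_lm : ∀ (p q : Octonion) (m : M),
    l (p * q) m - l p (l q m) = r p (l q m) - l q (r p m)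
  /-- `[p,q,m] = [m,p,q]` -/
  comp_rm : ∀ (p q : Octonion) (m : M),
    l (p * q) m - l p (l q m) = r q (r p m) - r (p * q) m

section Aux

namespace Octonion

lemma mul_def' (x y : Octonion) : x * y =
    (x.1 * y.1 - star y.2 * x.2, y.2 * x.1 + x.2 * star y.1) := rfl
lemma one_def' : (1 : Octonion) = ((1 : ℍ[ℝ]), 0) := rfl
lemma add_def' (x y : Octonion) : x + y = (x.1 + y.1, x.2 + y.2) := rfl
lemma sub_def' (x y : Octonion) : x - y = (x.1 - y.1, x.2 - y.2) := rfl
lemma smul_def' (r : ℝ) (x : Octonion) : r • x = (r • x.1, r • x.2) := rfl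
lemma ext' {x y : Octonion} (h1 : x.1 = y.1) (h2 : x.2 = y.2) : x = y := Prod.ext h1 h2
lemma fst_mul' (x y : Octonion) : (x * y).1 = x.1 * y.1 - star y.2 * x.2 := rfl
lemma snd_mul' (x y : Octonion) : (x * y).2 = y.2 * x.1 + x.2 * star y.1 := rfl
lemma fst_add' (x y : Octonion) : (x + y).1 = x.1 + y.1 := rfl
lemma snd_add' (x y : Octonion) : (x + y).2 = x.2 + y.2 := rfl
lemma fst_sub' (x y : Octonion) : (x - y).1 = x.1 - y.1 := rfl
lemma snd_sub' (x y : Octonion) : (x - y).2 = x.2 - y.2 := rfl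
lemma fst_smul' (r : ℝ) (x : Octonion) : (r • x).1 = r • x.1 := rfl
lemma snd_smul' (r : ℝ) (x : Octonion) : (r • x).2 = r • x.2 := rfl

lemma e0 : e 0 = ((⟨0,1,0,0⟩ : ℍ[ℝ]), 0) := rfl
lemma e1 : e 1 = ((⟨0,0,1,0⟩ : ℍ[ℝ]), 0) := rfl
lemma e2 : e 2 = ((⟨0,0,0,1⟩ : ℍ[ℝ]), 0) := rfl
lemma e3 : e 3 = (0, (1 : ℍ[ℝ])) := rfl
lemma e4 : e 4 = (0, (⟨0,1,0,0⟩ : ℍ[ℝ])) := rfl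
lemma e5 : e 5 = (0, (⟨0,0,1,0⟩ : ℍ[ℝ])) := rfl
lemma e6 : e 6 = (0, (⟨0,0,0,1⟩ : ℍ[ℝ])) := rfl

/-- "Real part" of an octonion. -/
def re (x : Octonion) : ℝ := x.1.re

lemma re_smul (r : ℝ) (x : Octonion) : re (r • x) = r * re x := rfl
lemma re_sub (x y : Octonion) : re (x - y) = re x - re y := rfl
lemma re_one : re (1 : Octonion) = 1 := rfl

/-- Left projection operator at the octonion level. -/
def op1 (p : Octonion) : Octonion :=
  (8:ℝ)⁻¹ • (p - e 0 * (e 1 * (e 2 * p)) - e 0 * (e 3 * (e 4 * p)) + e 0 * (e 5 * (e 6 * p))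
    - e 1 * (e 3 * (e 5 * p)) - e 1 * (e 4 * (e 6 * p)) - e 2 * (e 3 * (e 6 * p))
    + e 2 * (e 4 * (e 5 * p)))

/-- The companion operator with flipped signs. -/
def op2 (p : Octonion) : Octonion :=
  (8:ℝ)⁻¹ • (p + e 0 * (e 1 * (e 2 * p)) + e 0 * (e 3 * (e 4 * p)) - e 0 * (e 5 * (e 6 * p))
    + e 1 * (e 3 * (e 5 * p)) + e 1 * (e 4 * (e 6 * p)) + e 2 * (e 3 * (e 6 * p))
    - e 2 * (e 4 * (e 5 * p)))

/-- Reversed-product version corresponding to `op1` on conjugate-associative vectors. -/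
def oq1 (q : Octonion) : Octonion :=
  (8:ℝ)⁻¹ • (q - ((q * e 2) * e 1) * e 0 - ((q * e 4) * e 3) * e 0 + ((q * e 6) * e 5) * e 0
    - ((q * e 5) * e 3) * e 1 - ((q * e 6) * e 4) * e 1 - ((q * e 6) * e 3) * e 2
    + ((q * e 5) * e 4) * e 2)

/-- Reversed-product version corresponding to `op2` on conjugate-associative vectors. -/
def oq2 (q : Octonion) : Octonion :=
  (8:ℝ)⁻¹ • (q + ((q * e 2) * e 1) * e 0 + ((q * e 4) * e 3) * e 0 - ((q * e 6) * e 5) * e 0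
    + ((q * e 5) * e 3) * e 1 + ((q * e 6) * e 4) * e 1 + ((q * e 6) * e 3) * e 2
    - ((q * e 5) * e 4) * e 2)

set_option maxHeartbeats 4000000 in
lemma key1 (p : Octonion) :
    p - e 0 * (e 1 * (e 2 * p)) - e 0 * (e 3 * (e 4 * p)) + e 0 * (e 5 * (e 6 * p))
      - e 1 * (e 3 * (e 5 * p)) - e 1 * (e 4 * (e 6 * p)) - e 2 * (e 3 * (e 6 * p))
      + e 2 * (e 4 * (e 5 * p)) = ((8 : ℝ) * re p) • (1 : Octonion) := by
  refine ext' ?_ ?_ <;>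
  · simp only [fst_mul', snd_mul', fst_add', snd_add', fst_sub', snd_sub', fst_smul', snd_smul']
    ext <;>
      simp [Quaternion.re_mul, Quaternion.imI_mul, Quaternion.imJ_mul, Quaternion.imK_mul] <;>
      simp [e0, e1, e2, e3, e4, e5, e6, one_def', re] <;> ring

set_option maxHeartbeats 4000000 in
lemma key2 (q : Octonion) :
    q + ((q * e 2) * e 1) * e 0 + ((q * e 4) * e 3) * e 0 - ((q * e 6) * e 5) * e 0
      + ((q * e 5) * e 3) * e 1 + ((q * e 6) * e 4) * e 1 + ((q * e 6) * e 3) * e 2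
      - ((q * e 5) * e 4) * e 2 = ((8 : ℝ) * re q) • (1 : Octonion) := by
  refine ext' ?_ ?_ <;>
  · simp only [fst_mul', snd_mul', fst_add', snd_add', fst_sub', snd_sub', fst_smul', snd_smul']
    ext <;>
      simp [Quaternion.re_mul, Quaternion.imI_mul, Quaternion.imJ_mul, Quaternion.imK_mul] <;>
      simp [e0, e1, e2, e3, e4, e5, e6, one_def', re] <;> ring

set_option maxHeartbeats 4000000 in
lemma key3 (p : Octonion) :
    p + e 0 * (e 1 * (e 2 * p)) + e 0 * (e 3 * (e 4 * p)) - e 0 * (e 5 * (e 6 * p))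
      + e 1 * (e 3 * (e 5 * p)) + e 1 * (e 4 * (e 6 * p)) + e 2 * (e 3 * (e 6 * p))
      - e 2 * (e 4 * (e 5 * p)) = (2 : ℝ) • p - ((8 : ℝ) * re p) • (1 : Octonion) := by
  refine ext' ?_ ?_ <;>
  · simp only [fst_mul', snd_mul', fst_add', snd_add', fst_sub', snd_sub', fst_smul', snd_smul']
    ext <;>
      simp [Quaternion.re_mul, Quaternion.imI_mul, Quaternion.imJ_mul, Quaternion.imK_mul] <;>
      simp [e0, e1, e2, e3, e4, e5, e6, one_def', re] <;> ring

set_option maxHeartbeats 4000000 in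
lemma key4 (q : Octonion) :
    q - ((q * e 2) * e 1) * e 0 - ((q * e 4) * e 3) * e 0 + ((q * e 6) * e 5) * e 0
      - ((q * e 5) * e 3) * e 1 - ((q * e 6) * e 4) * e 1 - ((q * e 6) * e 3) * e 2
      + ((q * e 5) * e 4) * e 2 = (2 : ℝ) • q - ((8 : ℝ) * re q) • (1 : Octonion) := by
  refine ext' ?_ ?_ <;>
  · simp only [fst_mul', snd_mul', fst_add', snd_add', fst_sub', snd_sub', fst_smul', snd_smul']
    ext <;>
      simp [Quaternion.re_mul, Quaternion.imI_mul, Quaternion.imJ_mul, Quaternion.imK_mul] <;>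
      simp [e0, e1, e2, e3, e4, e5, e6, one_def', re] <;> ring

lemma op1_eq (p : Octonion) : op1 p = re p • 1 := by
  rw [op1, key1, smul_smul, show (8:ℝ)⁻¹ * (8 * re p) = re p by ring]

lemma oq2_eq (q : Octonion) : oq2 q = re q • 1 := by
  rw [oq2, key2, smul_smul, show (8:ℝ)⁻¹ * (8 * re q) = re q by ring]

lemma op2_eq (p : Octonion) : op2 p = (4:ℝ)⁻¹ • p - re p • 1 := by
  rw [op2, key3, smul_sub, smul_smul, smul_smul,
    show (8:ℝ)⁻¹ * 2 = (4:ℝ)⁻¹ by norm_num,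
    show (8:ℝ)⁻¹ * (8 * re p) = re p by ring]

lemma oq1_eq (q : Octonion) : oq1 q = (4:ℝ)⁻¹ • q - re q • 1 := by
  rw [oq1, key4, smul_sub, smul_smul, smul_smul,
    show (8:ℝ)⁻¹ * 2 = (4:ℝ)⁻¹ by norm_num,
    show (8:ℝ)⁻¹ * (8 * re q) = re q by ring]

lemma oq1_cubic (q : Octonion) :
    oq1 (oq1 (oq1 q)) + (2:ℝ)⁻¹ • oq1 (oq1 q) - (3/16 : ℝ) • oq1 q = 0 := by
  simp only [oq1_eq, re_smul, re_sub, re_one, mul_one, one_mul]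
  module

lemma op2_cubic (p : Octonion) :
    op2 (op2 (op2 p)) + (2:ℝ)⁻¹ • op2 (op2 p) - (3/16 : ℝ) • op2 p = 0 := by
  simp only [op2_eq, re_smul, re_sub, re_one, mul_one, one_mul]
  module

end Octonion

open Octonion

variable {M : Type} [AddCommGroup M] [Module ℝ M]

/-- The triple operator `m ↦ eᵢ(eⱼ(eₖ m))`. -/
def triOp (σ : LeftOModule M) (i j k : Fin 7) : M →ₗ[ℝ] M :=
  σ.smul (e i) ∘ₗ σ.smul (e j) ∘ₗ σ.smul (e k)

/-- The projection-like operator corresponding to `op1`/`oq1`. -/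
def pi1 (σ : LeftOModule M) : M →ₗ[ℝ] M :=
  (8:ℝ)⁻¹ • (LinearMap.id - triOp σ 0 1 2 - triOp σ 0 3 4 + triOp σ 0 5 6
    - triOp σ 1 3 5 - triOp σ 1 4 6 - triOp σ 2 3 6 + triOp σ 2 4 5)

/-- The projection-like operator corresponding to `op2`/`oq2`. -/
def pi2 (σ : LeftOModule M) : M →ₗ[ℝ] M :=
  (8:ℝ)⁻¹ • (LinearMap.id + triOp σ 0 1 2 + triOp σ 0 3 4 - triOp σ 0 5 6
    + triOp σ 1 3 5 + triOp σ 1 4 6 + triOp σ 2 3 6 - triOp σ 2 4 5)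

lemma smul_real_one (σ : LeftOModule M) (r : ℝ) (m : M) :
    σ.smul (r • (1 : Octonion)) m = r • m := by
  rw [map_smul]
  simp [σ.one_smul]

lemma pi1_assoc (σ : LeftOModule M) (m : M)
    (hm : ∀ p q : Octonion, σ.smul (p * q) m = σ.smul p (σ.smul q m)) (p : Octonion) :
    pi1 σ (σ.smul p m) = σ.smul (op1 p) m := by
  have h3 : ∀ a b c : Octonion,
      σ.smul a (σ.smul b (σ.smul c (σ.smul p m))) = σ.smul (a * (b * (c * p))) m := by
    intro a b c
    rw [← hm c p, ← hm b (c * p), ← hm a (b * (c * p))]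
  simp only [pi1, op1, triOp, LinearMap.smul_apply, LinearMap.sub_apply, LinearMap.add_apply,
    LinearMap.comp_apply, LinearMap.id_apply, h3, map_add, map_sub, map_smul]

lemma pi2_assoc (σ : LeftOModule M) (m : M)
    (hm : ∀ p q : Octonion, σ.smul (p * q) m = σ.smul p (σ.smul q m)) (p : Octonion) :
    pi2 σ (σ.smul p m) = σ.smul (op2 p) m := by
  have h3 : ∀ a b c : Octonion,
      σ.smul a (σ.smul b (σ.smul c (σ.smul p m))) = σ.smul (a * (b * (c * p))) m := by
    intro a b c
    rw [← hm c p, ← hm b (c * p), ← hm a (b * (c * p))]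
  simp only [pi2, op2, triOp, LinearMap.smul_apply, LinearMap.sub_apply, LinearMap.add_apply,
    LinearMap.comp_apply, LinearMap.id_apply, h3, map_add, map_sub, map_smul]

lemma pi1_conj (σ : LeftOModule M) (m : M)
    (hm : ∀ p q : Octonion, σ.smul (p * q) m = σ.smul q (σ.smul p m)) (q : Octonion) :
    pi1 σ (σ.smul q m) = σ.smul (oq1 q) m := by
  have h3 : ∀ a b c : Octonion,
      σ.smul a (σ.smul b (σ.smul c (σ.smul q m))) = σ.smul (((q * c) * b) * a) m := by
    intro a b c
    rw [← hm q c, ← hm (q * c) b, ← hm ((q * c) * b) a]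
  simp only [pi1, oq1, triOp, LinearMap.smul_apply, LinearMap.sub_apply, LinearMap.add_apply,
    LinearMap.comp_apply, LinearMap.id_apply, h3, map_add, map_sub, map_smul]

lemma pi2_conj (σ : LeftOModule M) (m : M)
    (hm : ∀ p q : Octonion, σ.smul (p * q) m = σ.smul q (σ.smul p m)) (q : Octonion) :
    pi2 σ (σ.smul q m) = σ.smul (oq2 q) m := by
  have h3 : ∀ a b c : Octonion,
      σ.smul a (σ.smul b (σ.smul c (σ.smul q m))) = σ.smul (((q * c) * b) * a) m := by
    intro a b c
    rw [← hm q c, ← hm (q * c) b, ← hm ((q * c) * b) a]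
  simp only [pi2, oq2, triOp, LinearMap.smul_apply, LinearMap.sub_apply, LinearMap.add_apply,
    LinearMap.comp_apply, LinearMap.id_apply, h3, map_add, map_sub, map_smul]

/-- `pi1` fixes associative elements. -/
lemma pi1_fix (σ : LeftOModule M) (m : M)
    (hm : ∀ p q : Octonion, σ.smul (p * q) m = σ.smul p (σ.smul q m)) :
    pi1 σ m = m := by
  have h : pi1 σ (σ.smul 1 m) = σ.smul (op1 1) m := pi1_assoc σ m hm 1
  rw [σ.one_smul] at h
  rw [h, op1_eq, re_one, smul_real_one, one_smul]

/-- `pi2` fixes conjugate-associative elements. -/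
lemma pi2_fix (σ : LeftOModule M) (m : M)
    (hm : ∀ p q : Octonion, σ.smul (p * q) m = σ.smul q (σ.smul p m)) :
    pi2 σ m = m := by
  have h : pi2 σ (σ.smul 1 m) = σ.smul (oq2 1) m := pi2_conj σ m hm 1
  have h1 : (1 : Octonion) * 1 = 1 := by
    rw [mul_def', one_def']; simp; rfl
  rw [σ.one_smul] at h
  rw [h, oq2_eq, Octonion.re_one, smul_real_one, one_smul]

/-- The cubic polynomial of `pi1`. -/
def Pi1 (σ : LeftOModule M) : M →ₗ[ℝ] M :=
  pi1 σ ∘ₗ pi1 σ ∘ₗ pi1 σ + (2:ℝ)⁻¹ • (pi1 σ ∘ₗ pi1 σ) - (3/16 : ℝ) • pi1 σ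

/-- The cubic polynomial of `pi2`. -/
def Pi2 (σ : LeftOModule M) : M →ₗ[ℝ] M :=
  pi2 σ ∘ₗ pi2 σ ∘ₗ pi2 σ + (2:ℝ)⁻¹ • (pi2 σ ∘ₗ pi2 σ) - (3/16 : ℝ) • pi2 σ

lemma Pi1_fix (σ : LeftOModule M) (m : M)
    (hm : ∀ p q : Octonion, σ.smul (p * q) m = σ.smul p (σ.smul q m)) :
    Pi1 σ m = (21/16 : ℝ) • m := by
  simp only [Pi1, LinearMap.sub_apply, LinearMap.add_apply, LinearMap.smul_apply,
    LinearMap.comp_apply, pi1_fix σ m hm]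
  module

lemma Pi2_fix (σ : LeftOModule M) (m : M)
    (hm : ∀ p q : Octonion, σ.smul (p * q) m = σ.smul q (σ.smul p m)) :
    Pi2 σ m = (21/16 : ℝ) • m := by
  simp only [Pi2, LinearMap.sub_apply, LinearMap.add_apply, LinearMap.smul_apply,
    LinearMap.comp_apply, pi2_fix σ m hm]
  module

end Aux

section Aux2

open Octonion

variable {M : Type} [AddCommGroup M] [Module ℝ M]

lemma Pi1_u (σ : LeftOModule M) (U : Submodule ℝ M)
    (hU : ∀ u ∈ U, ∀ p q : Octonion, σ.smul (p * q) u = σ.smul p (σ.smul q u))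
    (p : Octonion) (u : M) (hu : u ∈ U) : Pi1 σ (σ.smul p u) ∈ U := by
  have hstep : ∀ x : Octonion, pi1 σ (σ.smul x u) = σ.smul (op1 x) u :=
    fun x => pi1_assoc σ u (hU u hu) x
  have hfix : pi1 σ u = u := pi1_fix σ u (hU u hu)
  simp only [Pi1, LinearMap.sub_apply, LinearMap.add_apply, LinearMap.smul_apply,
    LinearMap.comp_apply, hstep, op1_eq, re_smul, re_one, mul_one, smul_real_one,
    map_smul, hfix, σ.one_smul, one_smul]
  have hmem : re p • u ∈ U := U.smul_mem _ hu
  exact U.sub_mem (U.add_mem hmem (U.smul_mem _ hmem)) (U.smul_mem _ hmem)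

lemma Pi1_v (σ : LeftOModule M) (V : Submodule ℝ M)
    (hV : ∀ v ∈ V, ∀ p q : Octonion, σ.smul (p * q) v = σ.smul q (σ.smul p v))
    (q : Octonion) (v : M) (hv : v ∈ V) : Pi1 σ (σ.smul q v) = 0 := by
  have hstep : ∀ x : Octonion, pi1 σ (σ.smul x v) = σ.smul (oq1 x) v :=
    fun x => pi1_conj σ v (hV v hv) x
  have hc := oq1_cubic q
  calc Pi1 σ (σ.smul q v)
      = σ.smul (oq1 (oq1 (oq1 q)) + (2:ℝ)⁻¹ • oq1 (oq1 q) - (3/16 : ℝ) • oq1 q) v := by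
        simp only [Pi1, LinearMap.sub_apply, LinearMap.add_apply, LinearMap.smul_apply,
          LinearMap.comp_apply, hstep, map_add, map_sub, map_smul]
    _ = 0 := by rw [hc]; simp

lemma Pi2_v (σ : LeftOModule M) (V : Submodule ℝ M)
    (hV : ∀ v ∈ V, ∀ p q : Octonion, σ.smul (p * q) v = σ.smul q (σ.smul p v))
    (q : Octonion) (v : M) (hv : v ∈ V) : Pi2 σ (σ.smul q v) ∈ V := by
  have hstep : ∀ x : Octonion, pi2 σ (σ.smul x v) = σ.smul (oq2 x) v :=
    fun x => pi2_conj σ v (hV v hv) x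
  have hfix : pi2 σ v = v := pi2_fix σ v (hV v hv)
  simp only [Pi2, LinearMap.sub_apply, LinearMap.add_apply, LinearMap.smul_apply,
    LinearMap.comp_apply, hstep, oq2_eq, re_smul, re_one, mul_one, smul_real_one,
    map_smul, hfix, σ.one_smul, one_smul]
  have hmem : re q • v ∈ V := V.smul_mem _ hv
  exact V.sub_mem (V.add_mem hmem (V.smul_mem _ hmem)) (V.smul_mem _ hmem)

lemma Pi2_u (σ : LeftOModule M) (U : Submodule ℝ M)
    (hU : ∀ u ∈ U, ∀ p q : Octonion, σ.smul (p * q) u = σ.smul p (σ.smul q u))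
    (p : Octonion) (u : M) (hu : u ∈ U) : Pi2 σ (σ.smul p u) = 0 := by
  have hstep : ∀ x : Octonion, pi2 σ (σ.smul x u) = σ.smul (op2 x) u :=
    fun x => pi2_assoc σ u (hU u hu) x
  have hc := op2_cubic p
  calc Pi2 σ (σ.smul p u)
      = σ.smul (op2 (op2 (op2 p)) + (2:ℝ)⁻¹ • op2 (op2 p) - (3/16 : ℝ) • op2 p) u := by
        simp only [Pi2, LinearMap.sub_apply, LinearMap.add_apply, LinearMap.smul_apply,
          LinearMap.comp_apply, hstep, map_add, map_sub, map_smul]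
    _ = 0 := by rw [hc]; simp

end Aux2

/-- For real subspaces `U ⊆ Assoc(M)` and `V ⊆ ConjAssoc(M)` of a left
`𝕆`-module, the submodule `M' = 𝕆U + 𝕆V` satisfies `Assoc(M') = U` and
`ConjAssoc(M') = V`. -/
theorem submodule_assoc_parts {M : Type} [AddCommGroup M] [Module ℝ M]
    (σ : LeftOModule M) (U V : Submodule ℝ M)
    (hU : ∀ u ∈ U, ∀ p q : Octonion, σ.smul (p * q) u = σ.smul p (σ.smul q u))
    (hV : ∀ v ∈ V, ∀ p q : Octonion, σ.smul (p * q) v = σ.smul q (σ.smul p v)) :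
    let M' : Submodule ℝ M := Submodule.span ℝ
      ({x | ∃ p : Octonion, ∃ u ∈ U, x = σ.smul p u} ∪
       {x | ∃ q : Octonion, ∃ v ∈ V, x = σ.smul q v})
    {m | m ∈ M' ∧ ∀ p q : Octonion, σ.smul (p * q) m = σ.smul p (σ.smul q m)}
        = (U : Set M) ∧
    {m | m ∈ M' ∧ ∀ p q : Octonion, σ.smul (p * q) m = σ.smul q (σ.smul p m)}
        = (V : Set M) := by
  intro M'
  constructor
  · apply Set.Subset.antisymm
    · rintro m ⟨hmM, hma⟩
      have hspan : Submodule.span ℝ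
          ({x | ∃ p : Octonion, ∃ u ∈ U, x = σ.smul p u} ∪
           {x | ∃ q : Octonion, ∃ v ∈ V, x = σ.smul q v}) ≤
          Submodule.comap (Pi1 σ) U := by
        rw [Submodule.span_le]
        rintro x (⟨p, u, hu, rfl⟩ | ⟨q, v, hv, rfl⟩)
        · exact Pi1_u σ U hU p u hu
        · simp only [SetLike.mem_coe, Submodule.mem_comap, Pi1_v σ V hV q v hv]
          exact U.zero_mem
      have hmem : Pi1 σ m ∈ U := hspan hmM
      have hfix : Pi1 σ m = (21/16 : ℝ) • m := Pi1_fix σ m hma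
      have hm' : m = (16/21 : ℝ) • Pi1 σ m := by
        rw [hfix, smul_smul]; norm_num
      rw [SetLike.mem_coe, hm']
      exact U.smul_mem _ hmem
    · intro u hu
      exact ⟨Submodule.subset_span (Or.inl ⟨1, u, hu, (σ.one_smul u).symm⟩), hU u hu⟩
  · apply Set.Subset.antisymm
    · rintro m ⟨hmM, hma⟩
      have hspan : Submodule.span ℝ
          ({x | ∃ p : Octonion, ∃ u ∈ U, x = σ.smul p u} ∪
           {x | ∃ q : Octonion, ∃ v ∈ V, x = σ.smul q v}) ≤
          Submodule.comap (Pi2 σ) V := by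
        rw [Submodule.span_le]
        rintro x (⟨p, u, hu, rfl⟩ | ⟨q, v, hv, rfl⟩)
        · simp only [SetLike.mem_coe, Submodule.mem_comap, Pi2_u σ U hU p u hu]
          exact V.zero_mem
        · exact Pi2_v σ V hV q v hv
      have hmem : Pi2 σ m ∈ V := hspan hmM
      have hfix : Pi2 σ m = (21/16 : ℝ) • m := Pi2_fix σ m hma
      have hm' : m = (16/21 : ℝ) • Pi2 σ m := by
        rw [hfix, smul_smul]; norm_num
      rw [SetLike.mem_coe, hm']
      exact V.smul_mem _ hmem
    · intro v hv
      exact ⟨Submodule.subset_span (Or.inr ⟨1, v, hv, (σ.one_smul v).symm⟩), hV v hv⟩
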